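/- Fix q, ℓ ∈ ℕ* with m = 2^q and a BI-DMC W (Bob's channel) with P_0 = W(·|0) everywhere positive. For each i ∈ {1,…,q}, let (φ_i, ψ_i) be an encoder–decoder pair for the level-i equivalent channel W^i, with φ_i: messages 𝒲_i → {0,1}^ℓ and ψ_i: (𝒴^{2^i})^ℓ → 𝒲_i, such that: (a) the average probability of error of (φ_i,ψ_i) over the memoryless channel (W^i)^{⊗ℓ} under a uniform message is at most ε_i, and (b) each decoding region D_{w_i} = {ỹ : ψ_i(ỹ) = w_i} is invariant under every permutation in Π_i^ℓ, where Π_i is the set of permutations of {1,…,2^i} mapping {1,…,2^{i−1}} onto itself and Π_i^ℓ acts by applying a (possibly different) element of Π_i to each of the ℓ blocks. Consider the MLC-PPM scheme: independent uniform messages W_1,…,W_q are encoded to X_i = φ_i(W_i) ∈ {0,1}^ℓ, in each position j ∈ {1,…,ℓ} the bits X_{1:q,j} are mapped to the PPM symbol x̃(X_{1:q,j}) and sent through W^{⊗m}, and the receiver performs multistage decoding: for i = q down to 1, Ŵ_i = ψ_i applied to the received symbols restricted, in each position j, to the coordinates 𝒜^q(X̂_{i+1:q,j}) (in increasing order), where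 X̂_k = φ_k(Ŵ_k). Then the probability of error satisfies P((Ŵ_1,…,Ŵ_q) ≠ (W_1,…,W_q)) ≤ Σ_{i=1}^q ε_i. -/

import Mathlib

open Finset

def IsPMF {𝒵 : Type} [Fintype 𝒵] (P : 𝒵 → ℝ) : Prop :=
  (∀ z, 0 ≤ P z) ∧ ∑ z, P z = 1

/-- Least-significant-bit-first binary-to-decimal map. -/
def dIdx (q : ℕ) (x : Fin q → Bool) : ℕ :=
  ∑ j : Fin q, if x j then 2^(j:ℕ) else 0

lemma sum_two_pow (q : ℕ) : ∑ j ∈ Finset.range q, 2^j = 2^q - 1 := by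
  induction q with
  | zero => simp
  | succ q ih =>
    rw [Finset.sum_range_succ, ih, pow_succ]
    have : 0 < 2^q := pow_pos (by norm_num) q
    omega

lemma dIdx_lt (q : ℕ) (x : Fin q → Bool) : dIdx q x < 2^q := by
  have h1 : dIdx q x ≤ ∑ j : Fin q, 2^(j:ℕ) := by
    apply Finset.sum_le_sum
    intro j _
    split <;> simp
  have h2 : ∑ j : Fin q, 2^(j:ℕ) = 2^q - 1 := by
    rw [Fin.sum_univ_eq_sum_range (fun j => 2^j) q, sum_two_pow]
  have : 0 < 2^q := pow_pos (by norm_num) q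
  omega

/-- Position (0-indexed) of the `1` in the PPM symbol encoding `x`. -/
def ppmPos (q : ℕ) (x : Fin q → Bool) : Fin (2^q) := ⟨dIdx q x, dIdx_lt q x⟩

/-- PPM super channel of the binary-input channel `W`:
`W̃(yt|x) = P1(y_{d(x)}) ∏_{h ≠ d(x)} P0(y_h)`. -/
noncomputable def superCh {𝒴 : Type} [Fintype 𝒴] [DecidableEq 𝒴] (W : Bool → 𝒴 → ℝ)
    (q : ℕ) (x : Fin q → Bool) (yt : Fin (2^q) → 𝒴) : ℝ :=
  W true (yt (ppmPos q x)) * ∏ h ∈ univ.erase (ppmPos q x), W false (yt h)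

/-- Conditional output pmf of the PPM super channel given the inputs off `S`:
`P_{Ỹ|X_{S^c}}(yt|x_{S^c}) = 2^{−|S|} ∑_{x_S} W̃(yt|x)`. -/
noncomputable def condOut {𝒴 : Type} [Fintype 𝒴] [DecidableEq 𝒴] (W : Bool → 𝒴 → ℝ)
    (q : ℕ) (S : Finset (Fin q)) (x : Fin q → Bool) (yt : Fin (2^q) → 𝒴) : ℝ :=
  ((2:ℝ)^S.card)⁻¹ * ∑ xs : {i : Fin q // i ∈ S} → Bool,
    superCh W q (fun i => if h : i ∈ S then xs ⟨i, h⟩ else x i) yt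

/-- Information density expectation `∑_{x,yt} 2^{−q} W̃(yt|x) log( P(yt|x_{A^c}) / P(yt|x_{B^c}) )`
(natural logarithm); with `A = ∅` and `B = S` this is `I(X_S;Ỹ|X_{S^c})`. -/
noncomputable def infoDen {𝒴 : Type} [Fintype 𝒴] [DecidableEq 𝒴] (W : Bool → 𝒴 → ℝ)
    (q : ℕ) (A B : Finset (Fin q)) : ℝ :=
  ∑ x : Fin q → Bool, ∑ yt : Fin (2^q) → 𝒴,
    ((2:ℝ)^q)⁻¹ * superCh W q x yt * Real.log (condOut W q A x yt / condOut W q B x yt)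

/-- Same with logarithm base 2 (information measured in bits). -/
noncomputable def infoDen2 {𝒴 : Type} [Fintype 𝒴] [DecidableEq 𝒴] (W : Bool → 𝒴 → ℝ)
    (q : ℕ) (A B : Finset (Fin q)) : ℝ :=
  ∑ x : Fin q → Bool, ∑ yt : Fin (2^q) → 𝒴,
    ((2:ℝ)^q)⁻¹ * superCh W q x yt * Real.logb 2 (condOut W q A x yt / condOut W q B x yt)

/-- Indicator of a proposition. -/
noncomputable def ind (P : Prop) : ℝ := @ite ℝ P (Classical.propDecidable P) 1 0

lemma two_pow_pos' (q : ℕ) : 0 < 2^q := pow_pos (by norm_num) q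

/-- The level-`i` equivalent channel (for 0-indexed level `i₀`, take `i = i₀ + 1`):
`W^i(y|x) = 2^{−(i−1)} ∑_{j=2^{i−1}x}^{2^{i−1}(x+1)−1} P0^{⊗2^i}(y) P1(y_j)/P0(y_j)`. -/
noncomputable def equivCh {𝒴 : Type} [Fintype 𝒴] (P0 P1 : 𝒴 → ℝ) (i : ℕ)
    (y : Fin (2^i) → 𝒴) (x : Bool) : ℝ :=
  ((2:ℝ)^(i-1))⁻¹ * ∑ j : Fin (2^i),
    if 2^(i-1) * (cond x 1 0) ≤ (j:ℕ) ∧ (j:ℕ) < 2^(i-1) * (cond x 1 0 + 1)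
    then (∏ h, P0 (y h)) * (P1 (y j) / P0 (y j)) else 0


/- ===== helpers ===== -/
section Helpers

lemma ind_nonneg (P : Prop) : 0 ≤ ind P := by unfold ind; split <;> norm_num

lemma ind_eq_one {P : Prop} (h : P) : ind P = 1 := by unfold ind; exact if_pos h

lemma ind_eq_zero {P : Prop} (h : ¬ P) : ind P = 0 := by unfold ind; exact if_neg h

lemma ind_congr {P Q : Prop} (h : P ↔ Q) : ind P = ind Q := by
  unfold ind; split <;> split <;> tauto

/-- high part of the index -/
def sigHi (q i : ℕ) (x : Fin q → Bool) : ℕ :=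
  ∑ t : Fin q, if i < (t:ℕ) then (if x t then 2^(t:ℕ) else 0) else 0

def sigLo (q i : ℕ) (x : Fin q → Bool) : ℕ :=
  ∑ t : Fin q, if (t:ℕ) < i then (if x t then 2^(t:ℕ) else 0) else 0

lemma sigLo_lt (q i : ℕ) (x : Fin q → Bool) : sigLo q i x < 2^i := by
  have h1 : sigLo q i x ≤ ∑ t : Fin q, (if (t:ℕ) < i then 2^(t:ℕ) else 0) := by
    apply Finset.sum_le_sum; intro t _; split
    · split <;> simp
    · simp
  have h2 : ∑ t : Fin q, (if (t:ℕ) < i then 2^(t:ℕ) else 0)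
      = ∑ t ∈ (Finset.range q).filter (· < i), 2^t := by
    rw [Fin.sum_univ_eq_sum_range (fun t => if t < i then 2^t else 0) q,
      Finset.sum_filter]
  have h3 : ∑ t ∈ (Finset.range q).filter (· < i), 2^t ≤ ∑ t ∈ Finset.range i, 2^t := by
    apply Finset.sum_le_sum_of_subset
    intro t ht; simp only [Finset.mem_filter, Finset.mem_range] at *; omega
  have h4 := sum_two_pow i
  have h5 : (0:ℕ) < 2^i := pow_pos (by norm_num) i
  unfold sigLo at *
  omega

lemma sigHi_le (q i : ℕ) (hi : i < q) (x : Fin q → Bool) : sigHi q i x ≤ 2^q - 2^(i+1) := by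
  have h1 : sigHi q i x ≤ ∑ t : Fin q, (if i < (t:ℕ) then 2^(t:ℕ) else 0) := by
    apply Finset.sum_le_sum; intro t _; split
    · split <;> simp
    · simp
  have h2 : ∑ t : Fin q, (if i < (t:ℕ) then 2^(t:ℕ) else 0)
      = ∑ t ∈ (Finset.range q).filter (i < ·), 2^t := by
    rw [Fin.sum_univ_eq_sum_range (fun t => if i < t then 2^t else 0) q,
      Finset.sum_filter]
  have h2' : (Finset.range q).filter (i < ·) = Finset.Ico (i+1) q := by
    ext t; simp only [Finset.mem_filter, Finset.mem_range, Finset.mem_Ico]; omega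
  have h3 := Finset.sum_Ico_consecutive (fun t => 2^t) (Nat.zero_le (i+1)) (Nat.succ_le_of_lt hi)
  rw [← Finset.range_eq_Ico, ← Finset.range_eq_Ico] at h3
  have h4 := sum_two_pow q
  have h5 := sum_two_pow (i+1)
  have h6 : (0:ℕ) < 2^(i+1) := pow_pos (by norm_num) (i+1)
  have h7 : 2^(i+1) ≤ 2^q := Nat.pow_le_pow_right (by norm_num) hi
  rw [h2'] at h2
  unfold sigHi at *
  omega

lemma dIdx_decomp (q : ℕ) (i : Fin q) (x : Fin q → Bool) :
    dIdx q x = sigHi q i x + 2^(i:ℕ) * (cond (x i) 1 0) + sigLo q (i:ℕ) x := by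
  unfold dIdx sigHi sigLo
  have key : ∀ t : Fin q, (if x t then 2^(t:ℕ) else 0)
      = ((if (i:ℕ) < (t:ℕ) then (if x t then 2^(t:ℕ) else 0) else 0)
        + (if t = i then 2^(t:ℕ) * (cond (x t) 1 0) else 0))
        + (if (t:ℕ) < (i:ℕ) then (if x t then 2^(t:ℕ) else 0) else 0) := by
    intro t
    rcases lt_trichotomy (t:ℕ) (i:ℕ) with h | h | h
    · have ht : ¬ (t = i) := by intro he; rw [he] at h; omega
      simp [h, ht, Nat.not_lt_of_lt h]
    · have ht : t = i := Fin.ext h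
      subst ht
      simp only [lt_irrefl, if_false, if_pos rfl, ite_true]
      cases x t <;> simp
    · have ht : ¬ (t = i) := by intro he; rw [he] at h; omega
      simp [h, ht, Nat.not_lt_of_lt h]
  calc ∑ t : Fin q, (if x t then 2^(t:ℕ) else 0)
      = ∑ t : Fin q, (((if (i:ℕ) < (t:ℕ) then (if x t then 2^(t:ℕ) else 0) else 0)
        + (if t = i then 2^(t:ℕ) * (cond (x t) 1 0) else 0))
        + (if (t:ℕ) < (i:ℕ) then (if x t then 2^(t:ℕ) else 0) else 0)) :=
        Finset.sum_congr rfl (fun t _ => key t)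
    _ = _ := by
        rw [Finset.sum_add_distrib, Finset.sum_add_distrib, Finset.sum_ite_eq' univ i
          (fun t => 2^(t:ℕ) * (cond (x t) 1 0))]
        simp


section recomb
variable {α β 𝒴 : Type} [Fintype α] [DecidableEq α] [Fintype β] [DecidableEq β] [Fintype 𝒴]
set_option linter.unusedSectionVars false

/-- Recombine values on the range of `e` (given by `u`) and off it (given by `v`). -/
noncomputable def recomb0 (e : β → α) (u : β → 𝒴) (v : {a : α // ¬ ∃ r, e r = a} → 𝒴) :
    α → 𝒴 :=
  fun a => if h : ∃ r, e r = a then u h.choose else v ⟨a, h⟩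

lemma recomb0_e {e : β → α} (he : Function.Injective e) (u : β → 𝒴)
    (v : {a : α // ¬ ∃ r, e r = a} → 𝒴) (r : β) : recomb0 e u v (e r) = u r := by
  unfold recomb0
  have h : ∃ r', e r' = e r := ⟨r, rfl⟩
  rw [dif_pos h]
  congr 1
  exact he h.choose_spec

lemma recomb0_compl {e : β → α} (u : β → 𝒴) (v : {a : α // ¬ ∃ r, e r = a} → 𝒴)
    (a : {a : α // ¬ ∃ r, e r = a}) : recomb0 e u v a.1 = v a := by
  unfold recomb0
  rw [dif_neg a.2]

lemma sum_recomb {ℓ : ℕ} (e : Fin ℓ → β → α) (he : ∀ p, Function.Injective (e p))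
    (g : (Fin ℓ → α → 𝒴) → ℝ) :
    ∑ yt : Fin ℓ → α → 𝒴, g yt
      = ∑ u : Fin ℓ → β → 𝒴, ∑ v : ∀ p : Fin ℓ, {a : α // ¬ ∃ r, e p r = a} → 𝒴,
          g (fun p => recomb0 (e p) (u p) (v p)) := by
  have hbij : Function.Bijective
      (fun uv : (Fin ℓ → β → 𝒴) × (∀ p : Fin ℓ, {a : α // ¬ ∃ r, e p r = a} → 𝒴) =>
        fun p => recomb0 (e p) (uv.1 p) (uv.2 p)) := by
    rw [Function.bijective_iff_has_inverse]
    refine ⟨fun yt => (fun p r => yt p (e p r), fun p a => yt p a.1), ?_, ?_⟩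
    · rintro ⟨u, v⟩
      ext p r
      · exact recomb0_e (he p) (u p) (v p) r
      · exact recomb0_compl (u p) (v p) _
    · intro yt
      funext p a
      show (if h : ∃ r, e p r = a then yt p (e p h.choose) else yt p a) = yt p a
      split
      · next h => rw [h.choose_spec]
      · rfl
  have main := (Fintype.sum_bijective _ hbij
    (fun uv : (Fin ℓ → β → 𝒴) × (∀ p : Fin ℓ, {a : α // ¬ ∃ r, e p r = a} → 𝒴) =>
      g (fun p => recomb0 (e p) (uv.1 p) (uv.2 p))) g (fun uv => rfl)).symm
  rw [main]
  exact Fintype.sum_prod_type _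

lemma prod_split {e : β → α} (he : Function.Injective e) (f : α → ℝ) :
    ∏ a, f a = (∏ r, f (e r)) * ∏ a : {a : α // ¬ ∃ r, e r = a}, f a.1 := by
  classical
  rw [← Finset.prod_mul_prod_compl (univ.image e) f]
  congr 1
  · rw [Finset.prod_image (fun r _ s _ h => he h)]
  · exact Finset.prod_subtype _ (fun a => by simp) f

lemma sum_prod_pmf {ι : Type} [Fintype ι] [DecidableEq ι] (δ : ι → Type)
    [∀ i, Fintype (δ i)] [∀ i, DecidableEq (δ i)] (P : 𝒴 → ℝ) (hP : ∑ y, P y = 1) :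
    ∑ v : ∀ i, δ i → 𝒴, ∏ i, ∏ h, P (v i h) = 1 := by
  classical
  have step : ∀ (γ : Type) [Fintype γ] [DecidableEq γ], ∑ f : γ → 𝒴, ∏ h, P (f h) = 1 := by
    intro γ _ _
    rw [← Fintype.piFinset_univ, ← Finset.prod_univ_sum (fun _ => (univ : Finset 𝒴))
      (fun _ y => P y)]
    simp [hP]
  rw [← Fintype.piFinset_univ, ← Finset.prod_univ_sum (fun i => (univ : Finset (δ i → 𝒴)))
    (fun i f => ∏ h, P (f h))]
  · exact Finset.prod_eq_one (fun i _ => step (δ i))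

end recomb
end Helpers


section ChanHelpers
variable {𝒴 : Type} [Fintype 𝒴] [DecidableEq 𝒴]

lemma sigHi_add_lt (q i : ℕ) (hi : i < q) (x : Fin q → Bool) (r : ℕ) (hr : r < 2^(i+1)) :
    sigHi q i x + r < 2^q := by
  have h1 := sigHi_le q i hi x
  have h2 : 2^(i+1) ≤ 2^q := Nat.pow_le_pow_right (by norm_num) hi
  omega

lemma superCh_split (W : Bool → 𝒴 → ℝ) (hpos : ∀ y, 0 < W false y)
    (q : ℕ) (x : Fin q → Bool) {β : Type} [Fintype β] [DecidableEq β]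
    (e : β → Fin (2^q)) (he : Function.Injective e)
    (jt : β) (hj : e jt = ppmPos q x) (u : β → 𝒴) (v : {a : Fin (2^q) // ¬ ∃ r, e r = a} → 𝒴) :
    superCh W q x (recomb0 e u v)
      = ((∏ r, W false (u r)) * (W true (u jt) / W false (u jt)))
        * ∏ a : {a : Fin (2^q) // ¬ ∃ r, e r = a}, W false (v a) := by
  unfold superCh
  have h1 : recomb0 e u v (ppmPos q x) = u jt := by rw [← hj, recomb0_e he]
  have h2 : W false (recomb0 e u v (ppmPos q x)) *
      ∏ h ∈ univ.erase (ppmPos q x), W false (recomb0 e u v h)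
      = ∏ h, W false (recomb0 e u v h) :=
    Finset.mul_prod_erase univ (fun h => W false (recomb0 e u v h)) (mem_univ (ppmPos q x))
  have h3 : ∏ h, W false (recomb0 e u v h)
      = (∏ r, W false (u r)) * ∏ a : {a : Fin (2^q) // ¬ ∃ r, e r = a}, W false (v a) := by
    rw [prod_split he (fun a => W false (recomb0 e u v a))]
    congr 1
    · exact Finset.prod_congr rfl (fun r _ => by rw [recomb0_e he])
    · exact Finset.prod_congr rfl (fun a _ => by rw [recomb0_compl])
  have hne : W false (u jt) ≠ 0 := ne_of_gt (hpos _)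
  rw [h1] at h2 ⊢
  rw [h3] at h2
  field_simp
  linear_combination (W true (u jt)) * h2

def embHalf (i : ℕ) (x : Bool) (c : Fin (2^i)) : Fin (2^(i+1)) :=
  ⟨2^i * (cond x 1 0) + c, by
    have hc := c.2
    have : (cond x 1 0) ≤ 1 := by cases x <;> simp
    have h2 : (2:ℕ)^(i+1) = 2^i * 2 := by rw [pow_succ]
    nlinarith [pow_pos (show (0:ℕ) < 2 by norm_num) i]⟩

lemma embHalf_lt_iff (i : ℕ) (x : Bool) (c : Fin (2^i)) :
    ((embHalf i x c : ℕ) < 2^i) ↔ x = false := by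
  have hc := c.2
  cases x <;> simp [embHalf] <;> omega

lemma equivCh_avg (P0 P1 : 𝒴 → ℝ) (i : ℕ) (x : Bool) (y : Fin (2^(i+1)) → 𝒴) :
    equivCh P0 P1 (i+1) y x = ((2:ℝ)^i)⁻¹ * ∑ c : Fin (2^i),
      (∏ h, P0 (y h)) * (P1 (y (embHalf i x c)) / P0 (y (embHalf i x c))) := by
  unfold equivCh
  have hsimp : (i+1-1) = i := rfl
  rw [hsimp]
  congr 1
  have hset : (univ : Finset (Fin (2^(i+1)))).filter
      (fun j : Fin (2^(i+1)) => 2^i * (cond x 1 0) ≤ (j:ℕ) ∧ (j:ℕ) < 2^i * (cond x 1 0 + 1))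
      = univ.image (embHalf i x) := by
    ext j
    simp only [Finset.mem_filter, Finset.mem_image, mem_univ, true_and]
    constructor
    · rintro ⟨h1, h2⟩
      have hd : 2^i * ((cond x 1 0) + 1) = 2^i * (cond x 1 0) + 2^i := by ring
      have hc : (j:ℕ) - 2^i * (cond x 1 0) < 2^i := by omega
      refine ⟨⟨(j:ℕ) - 2^i * (cond x 1 0), hc⟩, ?_⟩
      apply Fin.ext
      simp only [embHalf]
      omega
    · rintro ⟨c, rfl⟩
      have hc := c.2
      simp only [embHalf]
      constructor
      · omega
      · have : 2^i * (cond x 1 0 + 1) = 2^i * (cond x 1 0) + 2^i := by ring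
        omega
  rw [Finset.sum_ite, Finset.sum_const_zero, add_zero]
  rw [hset, Finset.sum_image (fun a _ b _ h => by
    have : ((embHalf i x a : ℕ)) = ((embHalf i x b : ℕ)) := by rw [h]
    simp only [embHalf] at this
    exact Fin.ext (by omega))]

lemma sum_perm_reindex {ℓ n : ℕ} (π : Fin ℓ → Equiv.Perm (Fin n))
    (F : (Fin ℓ → Fin n → 𝒴) → ℝ) :
    ∑ u : Fin ℓ → Fin n → 𝒴, F (fun p r => u p (π p r)) = ∑ u, F u :=
  Equiv.sum_comp (Equiv.piCongrRight fun p => Equiv.arrowCongr (π p).symm (Equiv.refl 𝒴)) F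

lemma swap_preserves_lower {n m : ℕ} (a b : Fin n) (hab : ((a:ℕ) < m) ↔ ((b:ℕ) < m))
    (r : Fin n) (hr : (r:ℕ) < m) : ((Equiv.swap a b r : ℕ) < m) := by
  rw [Equiv.swap_apply_def]
  split
  · next h => subst h; omega
  · split
    · next h => subst h; omega
    · exact hr

lemma sum_pi_eval {q : ℕ} (𝒲 : Fin q → Type) [∀ i, Fintype (𝒲 i)] [∀ i, DecidableEq (𝒲 i)]
    (i : Fin q) (f : 𝒲 i → ℝ) :
    ∑ w : ∀ t, 𝒲 t, f (w i)
      = (∏ t ∈ univ.erase i, (Fintype.card (𝒲 t) : ℝ)) * ∑ wi, f wi := by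
  classical
  rw [← Equiv.sum_comp (Equiv.piSplitAt i 𝒲).symm (fun w => f (w i))]
  rw [Fintype.sum_prod_type]
  have heval : ∀ (a : 𝒲 i) (g : ∀ j : {j // j ≠ i}, 𝒲 j),
      ((Equiv.piSplitAt i 𝒲).symm (a, g)) i = a := by
    intro a g
    simp [Equiv.piSplitAt_symm_apply]
  have : ∀ a : 𝒲 i, ∑ g : ∀ j : {j // j ≠ i}, 𝒲 j,
      f (((Equiv.piSplitAt i 𝒲).symm (a, g)) i)
      = (Fintype.card (∀ j : {j // j ≠ i}, 𝒲 j) : ℝ) * f a := by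
    intro a
    rw [Finset.sum_congr rfl (fun g _ => by rw [heval a g])]
    rw [Finset.sum_const, nsmul_eq_mul]
    congr 1
  rw [Finset.sum_congr rfl (fun a _ => this a)]
  rw [← Finset.mul_sum]
  congr 1
  rw [Fintype.card_pi]
  rw [Finset.prod_subtype (univ.erase i) (p := fun j => j ≠ i) (by simp)
    (fun t => (Fintype.card (𝒲 t) : ℝ))]
  push_cast
  rfl

end ChanHelpers


section LevelMarg
variable {𝒴 : Type} [Fintype 𝒴] [DecidableEq 𝒴]
attribute [-instance] Nat.decidableExistsFin

lemma superCh_nonneg (W : Bool → 𝒴 → ℝ) (hW0 : ∀ x y, 0 ≤ W x y) (q : ℕ)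
    (x : Fin q → Bool) (yt : Fin (2^q) → 𝒴) : 0 ≤ superCh W q x yt :=
  mul_nonneg (hW0 _ _) (Finset.prod_nonneg fun _ _ => hW0 _ _)

lemma level_marg (q ℓ : ℕ) (W : Bool → 𝒴 → ℝ)
    (hW : ∀ x, IsPMF (W x)) (hpos : ∀ y, 0 < W false y)
    (i : ℕ) (hi : i < q)
    {M : Type} [Fintype M] [DecidableEq M]
    (ψi : (Fin ℓ → Fin (2^(i+1)) → 𝒴) → M)
    (hinv : ∀ (π : Fin ℓ → Equiv.Perm (Fin (2^(i+1)))),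
      (∀ p (r : Fin (2^(i+1))), (r:ℕ) < 2^i → ((π p r : ℕ) < 2^i)) →
      ∀ yv, ψi (fun p r => yv p (π p r)) = ψi yv)
    (x : Fin ℓ → Fin q → Bool) (F : M → ℝ) :
    ∑ ytv : Fin ℓ → Fin (2^q) → 𝒴, (∏ p, superCh W q (x p) (ytv p)) *
        F (ψi (fun p r => ytv p ⟨sigHi q i (x p) + (r:ℕ),
            sigHi_add_lt q i hi (x p) r r.2⟩))
      = ∑ u : Fin ℓ → Fin (2^(i+1)) → 𝒴,
          (∏ p, equivCh (W false) (W true) (i+1) (u p) (x p ⟨i, hi⟩)) * F (ψi u) := by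
  classical
  -- notation
  set P0 : 𝒴 → ℝ := W false with hP0def
  set P1 : 𝒴 → ℝ := W true with hP1def
  -- the embedding of the surviving coordinates
  set e : Fin ℓ → Fin (2^(i+1)) → Fin (2^q) :=
    (fun p r => ⟨sigHi q i (x p) + (r:ℕ), sigHi_add_lt q i hi (x p) r r.2⟩) with hedef
  have he : ∀ p, Function.Injective (e p) := by
    intro p r s hrs
    have : sigHi q i (x p) + (r:ℕ) = sigHi q i (x p) + (s:ℕ) := congrArg Fin.val hrs
    exact Fin.ext (by omega)
  -- lower-bits index and PPM position inside the block
  set b0 : Fin ℓ → Fin (2^i) := (fun p => ⟨sigLo q i (x p), sigLo_lt q i (x p)⟩) with hb0def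
  set jt : Fin ℓ → Fin (2^(i+1)) := (fun p => embHalf i (x p ⟨i, hi⟩) (b0 p)) with hjtdef
  have hj : ∀ p, e p (jt p) = ppmPos q (x p) := by
    intro p
    apply Fin.ext
    show sigHi q i (x p) + (2^i * (cond (x p ⟨i, hi⟩) 1 0) + sigLo q i (x p)) = dIdx q (x p)
    rw [dIdx_decomp q ⟨i, hi⟩ (x p)]
    ring
  -- block transition weights, parameterized by the lower-bits index
  set T : Fin ℓ → Fin (2^i) → (Fin (2^(i+1)) → 𝒴) → ℝ :=
    (fun p c yb => (∏ r, P0 (yb r)) *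
      (P1 (yb (embHalf i (x p ⟨i, hi⟩) c)) / P0 (yb (embHalf i (x p ⟨i, hi⟩) c)))) with hTdef
  -- Step 1+2: marginalize the dead coordinates
  have step2 : ∑ ytv : Fin ℓ → Fin (2^q) → 𝒴, (∏ p, superCh W q (x p) (ytv p)) *
        F (ψi (fun p r => ytv p (e p r)))
      = ∑ u : Fin ℓ → Fin (2^(i+1)) → 𝒴, (∏ p, T p (b0 p) (u p)) * F (ψi u) := by
    rw [sum_recomb e he (fun ytv => (∏ p, superCh W q (x p) (ytv p)) *
      F (ψi (fun p r => ytv p (e p r))))]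
    apply Finset.sum_congr rfl
    intro u _
    have hsum := sum_prod_pmf (𝒴 := 𝒴) (fun p : Fin ℓ => {a : Fin (2^q) // ¬ ∃ r, e p r = a})
      P0 (hW false).2
    calc ∑ v : ∀ p : Fin ℓ, {a : Fin (2^q) // ¬ ∃ r, e p r = a} → 𝒴,
          (∏ p, superCh W q (x p) (recomb0 (e p) (u p) (v p))) *
            F (ψi (fun p r => recomb0 (e p) (u p) (v p) (e p r)))
        = ∑ v : ∀ p : Fin ℓ, {a : Fin (2^q) // ¬ ∃ r, e p r = a} → 𝒴,
            ((∏ p, T p (b0 p) (u p)) * F (ψi u)) *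
              (∏ p, ∏ a : {a : Fin (2^q) // ¬ ∃ r, e p r = a}, P0 (v p a)) := by
          apply Finset.sum_congr rfl
          intro v _
          have hFa : (fun p r => recomb0 (e p) (u p) (v p) (e p r)) = u := by
            funext p r
            exact recomb0_e (he p) (u p) (v p) r
          rw [hFa]
          have hprod : ∀ p, superCh W q (x p) (recomb0 (e p) (u p) (v p))
              = T p (b0 p) (u p) * ∏ a : {a : Fin (2^q) // ¬ ∃ r, e p r = a}, P0 (v p a) := by
            intro p
            exact superCh_split W hpos q (x p) (e p) (he p) (jt p) (hj p) (u p) (v p)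
          rw [Finset.prod_congr rfl (fun p _ => hprod p), Finset.prod_mul_distrib]
          ring
      _ = (∏ p, T p (b0 p) (u p)) * F (ψi u) := by
          rw [← Finset.mul_sum, hsum, mul_one]
  -- Step 3: the marginal is invariant under changing the lower-bits index
  have step3 : ∀ b : Fin ℓ → Fin (2^i),
      ∑ u : Fin ℓ → Fin (2^(i+1)) → 𝒴, (∏ p, T p (b p) (u p)) * F (ψi u)
        = ∑ u : Fin ℓ → Fin (2^(i+1)) → 𝒴, (∏ p, T p (b0 p) (u p)) * F (ψi u) := by
    intro b
    set π : Fin ℓ → Equiv.Perm (Fin (2^(i+1))) :=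
      (fun p => Equiv.swap (embHalf i (x p ⟨i, hi⟩) (b p)) (embHalf i (x p ⟨i, hi⟩) (b0 p)))
      with hπdef
    have hπlow : ∀ p (r : Fin (2^(i+1))), (r:ℕ) < 2^i → ((π p r : ℕ) < 2^i) := by
      intro p r hr
      exact swap_preserves_lower _ _
        ((embHalf_lt_iff i _ (b p)).trans (embHalf_lt_iff i _ (b0 p)).symm)
        r hr
    have hre := sum_perm_reindex (𝒴 := 𝒴) π (fun u => (∏ p, T p (b p) (u p)) * F (ψi u))
    rw [← hre]
    apply Finset.sum_congr rfl
    intro u _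
    congr 1
    · apply Finset.prod_congr rfl
      intro p _
      show T p (b p) (fun r => u p (π p r)) = T p (b0 p) (u p)
      have h1 : ∏ r, P0 (u p (π p r)) = ∏ r, P0 (u p r) :=
        Equiv.prod_comp (π p) (fun s => P0 (u p s))
      have h2 : π p (embHalf i (x p ⟨i, hi⟩) (b p)) = embHalf i (x p ⟨i, hi⟩) (b0 p) :=
        Equiv.swap_apply_left _ _
      show (∏ r, P0 (u p (π p r))) *
          (P1 (u p (π p (embHalf i (x p ⟨i, hi⟩) (b p)))) /
            P0 (u p (π p (embHalf i (x p ⟨i, hi⟩) (b p)))))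
        = T p (b0 p) (u p)
      rw [h1, h2]
    · rw [hinv π hπlow u]
  -- Step 4: averaging over the lower-bits index gives the equivalent channel
  have step4 : ∑ u : Fin ℓ → Fin (2^(i+1)) → 𝒴,
        (∏ p, equivCh (W false) (W true) (i+1) (u p) (x p ⟨i, hi⟩)) * F (ψi u)
      = ∑ u : Fin ℓ → Fin (2^(i+1)) → 𝒴, (∏ p, T p (b0 p) (u p)) * F (ψi u) := by
    have havg : ∀ (p : Fin ℓ) (yb : Fin (2^(i+1)) → 𝒴),
        equivCh (W false) (W true) (i+1) yb (x p ⟨i, hi⟩)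
          = ∑ c : Fin (2^i), ((2:ℝ)^i)⁻¹ * T p c yb := by
      intro p yb
      rw [equivCh_avg, Finset.mul_sum, hTdef]
    have hcard : ((Fintype.card (Fin ℓ → Fin (2^i)) : ℝ)) = ((2:ℝ)^i)^ℓ := by
      rw [Fintype.card_fun, Fintype.card_fin, Fintype.card_fin]
      push_cast
      ring
    calc ∑ u : Fin ℓ → Fin (2^(i+1)) → 𝒴,
          (∏ p, equivCh (W false) (W true) (i+1) (u p) (x p ⟨i, hi⟩)) * F (ψi u)
        = ∑ u : Fin ℓ → Fin (2^(i+1)) → 𝒴,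
            ∑ b : Fin ℓ → Fin (2^i), (∏ p, ((2:ℝ)^i)⁻¹ * T p (b p) (u p)) * F (ψi u) := by
          apply Finset.sum_congr rfl
          intro u _
          rw [Finset.prod_congr rfl (fun p _ => havg p (u p)),
            ← Fintype.piFinset_univ,
            Finset.prod_univ_sum (fun _ => (univ : Finset (Fin (2^i))))
              (fun p c => ((2:ℝ)^i)⁻¹ * T p c (u p)), Finset.sum_mul]
      _ = ∑ b : Fin ℓ → Fin (2^i), ∑ u : Fin ℓ → Fin (2^(i+1)) → 𝒴,
            ((((2:ℝ)^i)⁻¹)^ℓ * ((∏ p, T p (b p) (u p)) * F (ψi u))) := by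
          rw [Finset.sum_comm]
          apply Finset.sum_congr rfl
          intro b _
          apply Finset.sum_congr rfl
          intro u _
          rw [Finset.prod_mul_distrib, Finset.prod_const]
          simp [mul_assoc]
      _ = ∑ b : Fin ℓ → Fin (2^i),
            (((2:ℝ)^i)⁻¹)^ℓ * ∑ u : Fin ℓ → Fin (2^(i+1)) → 𝒴,
              (∏ p, T p (b0 p) (u p)) * F (ψi u) := by
          apply Finset.sum_congr rfl
          intro b _
          rw [← Finset.mul_sum, step3 b]
      _ = ∑ u : Fin ℓ → Fin (2^(i+1)) → 𝒴, (∏ p, T p (b0 p) (u p)) * F (ψi u) := by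
          rw [Finset.sum_const, nsmul_eq_mul, Finset.card_univ, hcard, ← mul_assoc, ← mul_pow]
          rw [mul_inv_cancel₀ (by positivity : ((2:ℝ)^i) ≠ 0)]
          simp
  rw [step4]
  exact step2

end LevelMarg

/-- Lemma 5 (multistage decoding): if for each (0-indexed) level `i` the code
`(φ_i, ψ_i)` has average error probability at most `ε_i` on the memoryless extension
of its equivalent channel, and each decoder's decoding regions are invariant under
all per-position permutations preserving the lower half of the coordinates, then the
MLC-PPM scheme with multistage decoding (each level decoded from the received PPM
symbols restricted, in each position, to the coordinates compatible with the
already-decoded higher levels, in increasing order) has error probability at most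
`∑_i ε_i`. -/
theorem stmt16 {𝒴 : Type} [Fintype 𝒴] [DecidableEq 𝒴]
    (q ℓ : ℕ) (hq : 1 ≤ q) (hℓ : 1 ≤ ℓ)
    (W : Bool → 𝒴 → ℝ) (hW : ∀ x, IsPMF (W x)) (hpos : ∀ y, 0 < W false y)
    (𝒲 : Fin q → Type) [∀ i, Fintype (𝒲 i)] [∀ i, DecidableEq (𝒲 i)]
    [∀ i, Nonempty (𝒲 i)]
    (φ : ∀ i : Fin q, 𝒲 i → Fin ℓ → Bool)
    (ψ : ∀ i : Fin q, (Fin ℓ → Fin (2^((i:ℕ)+1)) → 𝒴) → 𝒲 i)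
    (ε : Fin q → ℝ)
    (herr : ∀ i : Fin q,
      (Fintype.card (𝒲 i) : ℝ)⁻¹ *
        ∑ w : 𝒲 i, ∑ yv : Fin ℓ → Fin (2^((i:ℕ)+1)) → 𝒴,
          (∏ p, equivCh (W false) (W true) ((i:ℕ)+1) (yv p) (φ i w p)) *
          ind (ψ i yv ≠ w) ≤ ε i)
    (hinv : ∀ (i : Fin q) (π : Fin ℓ → Equiv.Perm (Fin (2^((i:ℕ)+1)))),
      (∀ p (r : Fin (2^((i:ℕ)+1))), (r : ℕ) < 2^(i:ℕ) → ((π p r : ℕ) < 2^(i:ℕ))) →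
      ∀ yv, ψ i (fun p r => yv p (π p r)) = ψ i yv)
    (West : ∀ i : Fin q, (Fin ℓ → Fin (2^q) → 𝒴) → 𝒲 i)
    (hWest : ∀ i ytv, West i ytv = ψ i (fun p r =>
      ytv p ⟨((∑ t : Fin q, if (i:ℕ) < (t:ℕ) then
                  (if φ t (West t ytv) p then 2^(t:ℕ) else 0) else 0) + (r:ℕ)) % 2^q,
              Nat.mod_lt _ (two_pow_pos' q)⟩)) :
    ∑ w : ∀ i : Fin q, 𝒲 i, (∏ i, (Fintype.card (𝒲 i) : ℝ)⁻¹) *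
      ∑ ytv : Fin ℓ → Fin (2^q) → 𝒴,
        (∏ p, superCh W q (fun i => φ i (w i) p) (ytv p)) *
        ind (∃ i, West i ytv ≠ w i)
      ≤ ∑ i, ε i := by
  classical
  -- abbreviation for the error event of level i under genie-aided (true) higher levels
  set Err : Fin q → (∀ t : Fin q, 𝒲 t) → (Fin ℓ → Fin (2^q) → 𝒴) → Prop :=
    (fun i w ytv => ψ i (fun p r => ytv p
      ⟨sigHi q (i:ℕ) (fun t => φ t (w t) p) + (r:ℕ),
        sigHi_add_lt q (i:ℕ) i.2 (fun t => φ t (w t) p) r r.2⟩) ≠ w i) with hErr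
  -- Step A : union bound, pointwise
  have hA : ∀ (w : ∀ t : Fin q, 𝒲 t) (ytv : Fin ℓ → Fin (2^q) → 𝒴),
      ind (∃ t, West t ytv ≠ w t) ≤ ∑ i : Fin q, ind (Err i w ytv) := by
    intro w ytv
    by_cases hex : ∃ t, West t ytv ≠ w t
    · set s : Finset (Fin q) := univ.filter (fun t => West t ytv ≠ w t) with hs
      have hsne : s.Nonempty := by
        obtain ⟨t, ht⟩ := hex
        exact ⟨t, by simp [hs, ht]⟩
      set i : Fin q := s.max' hsne with hidef
      have hi_mem : West i ytv ≠ w i := (Finset.mem_filter.mp (s.max'_mem hsne)).2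
      have hgt : ∀ t : Fin q, (i:ℕ) < (t:ℕ) → West t ytv = w t := by
        intro t ht
        by_contra hne
        have hts : t ∈ s := Finset.mem_filter.mpr ⟨mem_univ t, hne⟩
        have := s.le_max' t hts
        rw [Fin.le_def] at this
        omega
      have hWi : West i ytv = ψ i (fun p r => ytv p
          ⟨sigHi q (i:ℕ) (fun t => φ t (w t) p) + (r:ℕ),
            sigHi_add_lt q (i:ℕ) i.2 (fun t => φ t (w t) p) r r.2⟩) := by
        rw [hWest i ytv]
        congr 1
        funext p r
        congr 1
        apply Fin.ext
        have hsig : (∑ t : Fin q, if (i:ℕ) < (t:ℕ) then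
              (if φ t (West t ytv) p then 2^(t:ℕ) else 0) else 0)
            = sigHi q (i:ℕ) (fun t => φ t (w t) p) := by
          apply Finset.sum_congr rfl
          intro t _
          by_cases h : (i:ℕ) < (t:ℕ)
          · rw [if_pos h, if_pos h, hgt t h]
          · rw [if_neg h, if_neg h]
        show (_ + (r:ℕ)) % 2^q = sigHi q (i:ℕ) (fun t => φ t (w t) p) + (r:ℕ)
        rw [hsig]
        exact Nat.mod_eq_of_lt (sigHi_add_lt q (i:ℕ) i.2 (fun t => φ t (w t) p) r r.2)
      have hErri : Err i w ytv := by
        show ψ i (fun p r => ytv p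
          ⟨sigHi q (i:ℕ) (fun t => φ t (w t) p) + (r:ℕ),
            sigHi_add_lt q (i:ℕ) i.2 (fun t => φ t (w t) p) r r.2⟩) ≠ w i
        rw [← hWi]
        exact hi_mem
      calc ind (∃ t, West t ytv ≠ w t) = 1 := ind_eq_one hex
        _ = ind (Err i w ytv) := (ind_eq_one hErri).symm
        _ ≤ ∑ j : Fin q, ind (Err j w ytv) :=
            Finset.single_le_sum (f := fun j => ind (Err j w ytv))
              (fun j _ => ind_nonneg _) (mem_univ i)
    · rw [ind_eq_zero hex]
      exact Finset.sum_nonneg (fun j _ => ind_nonneg _)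
  -- nonnegativity facts
  have hc0 : (0:ℝ) ≤ ∏ t, (Fintype.card (𝒲 t) : ℝ)⁻¹ :=
    Finset.prod_nonneg (fun t _ => inv_nonneg.2 (Nat.cast_nonneg _))
  have hP0 : ∀ (w : ∀ t : Fin q, 𝒲 t) (ytv : Fin ℓ → Fin (2^q) → 𝒴),
      (0:ℝ) ≤ ∏ p, superCh W q (fun t => φ t (w t) p) (ytv p) :=
    fun w ytv => Finset.prod_nonneg (fun p _ =>
      superCh_nonneg W (fun a y => (hW a).1 y) q _ _)
  -- Step B : assemble
  calc ∑ w : ∀ i : Fin q, 𝒲 i, (∏ i, (Fintype.card (𝒲 i) : ℝ)⁻¹) *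
      ∑ ytv : Fin ℓ → Fin (2^q) → 𝒴,
        (∏ p, superCh W q (fun i => φ i (w i) p) (ytv p)) *
        ind (∃ i, West i ytv ≠ w i)
      ≤ ∑ w : ∀ i : Fin q, 𝒲 i, (∏ i, (Fintype.card (𝒲 i) : ℝ)⁻¹) *
        ∑ ytv : Fin ℓ → Fin (2^q) → 𝒴,
          (∏ p, superCh W q (fun i => φ i (w i) p) (ytv p)) *
          ∑ i : Fin q, ind (Err i w ytv) := by
        apply Finset.sum_le_sum
        intro w _
        apply mul_le_mul_of_nonneg_left ?_ hc0
        apply Finset.sum_le_sum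
        intro ytv _
        exact mul_le_mul_of_nonneg_left (hA w ytv) (hP0 w ytv)
    _ = ∑ i : Fin q, ∑ w : ∀ i : Fin q, 𝒲 i, (∏ i, (Fintype.card (𝒲 i) : ℝ)⁻¹) *
        ∑ ytv : Fin ℓ → Fin (2^q) → 𝒴,
          (∏ p, superCh W q (fun i => φ i (w i) p) (ytv p)) * ind (Err i w ytv) := by
        rw [Finset.sum_comm]
        apply Finset.sum_congr rfl
        intro w _
        rw [← Finset.mul_sum]
        congr 1
        rw [Finset.sum_comm]
        apply Finset.sum_congr rfl
        intro ytv _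
        rw [Finset.mul_sum]
    _ ≤ ∑ i, ε i := by
        apply Finset.sum_le_sum
        intro i _
        -- level-i bound
        have hmarg : ∀ w : ∀ t : Fin q, 𝒲 t,
            ∑ ytv : Fin ℓ → Fin (2^q) → 𝒴,
              (∏ p, superCh W q (fun t => φ t (w t) p) (ytv p)) * ind (Err i w ytv)
            = ∑ u : Fin ℓ → Fin (2^((i:ℕ)+1)) → 𝒴,
                (∏ p, equivCh (W false) (W true) ((i:ℕ)+1) (u p) (φ i (w i) p)) *
                  ind (ψ i u ≠ w i) := by
          intro w
          exact level_marg q ℓ W hW hpos (i:ℕ) i.2 (ψ i) (hinv i)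
            (fun p t => φ t (w t) p) (fun m => ind (m ≠ w i))
        calc ∑ w : ∀ i : Fin q, 𝒲 i, (∏ i, (Fintype.card (𝒲 i) : ℝ)⁻¹) *
            ∑ ytv : Fin ℓ → Fin (2^q) → 𝒴,
              (∏ p, superCh W q (fun i => φ i (w i) p) (ytv p)) * ind (Err i w ytv)
            = (∏ t, (Fintype.card (𝒲 t) : ℝ)⁻¹) *
              ((∏ t ∈ univ.erase i, (Fintype.card (𝒲 t) : ℝ)) *
                ∑ wi : 𝒲 i, ∑ u : Fin ℓ → Fin (2^((i:ℕ)+1)) → 𝒴,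
                  (∏ p, equivCh (W false) (W true) ((i:ℕ)+1) (u p) (φ i wi p)) *
                    ind (ψ i u ≠ wi)) := by
              rw [Finset.sum_congr rfl (fun w _ => by rw [hmarg w]), ← Finset.mul_sum]
              congr 1
              exact sum_pi_eval 𝒲 i (fun wi => ∑ u : Fin ℓ → Fin (2^((i:ℕ)+1)) → 𝒴,
                (∏ p, equivCh (W false) (W true) ((i:ℕ)+1) (u p) (φ i wi p)) *
                  ind (ψ i u ≠ wi))
          _ = (Fintype.card (𝒲 i) : ℝ)⁻¹ *
              ∑ wi : 𝒲 i, ∑ u : Fin ℓ → Fin (2^((i:ℕ)+1)) → 𝒴,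
                (∏ p, equivCh (W false) (W true) ((i:ℕ)+1) (u p) (φ i wi p)) *
                  ind (ψ i u ≠ wi) := by
              rw [← mul_assoc]
              congr 1
              have h1 : ∏ t, (Fintype.card (𝒲 t) : ℝ)⁻¹
                  = (Fintype.card (𝒲 i) : ℝ)⁻¹ * ∏ t ∈ univ.erase i, (Fintype.card (𝒲 t) : ℝ)⁻¹ :=
                (Finset.mul_prod_erase univ (fun t => (Fintype.card (𝒲 t) : ℝ)⁻¹)
                  (mem_univ i)).symm
              rw [h1, mul_assoc, ← Finset.prod_mul_distrib]
              have h2 : ∀ t ∈ univ.erase i, (Fintype.card (𝒲 t) : ℝ)⁻¹ * (Fintype.card (𝒲 t) : ℝ) = 1 :=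
                fun t _ => inv_mul_cancel₀ (Nat.cast_ne_zero.2 Fintype.card_ne_zero)
              rw [Finset.prod_congr rfl h2, Finset.prod_const_one, mul_one]
          _ ≤ ε i := herr i
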